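/- Let Γ be a finite type, let p and p' be probability mass functions on Γ with p'(γ) > 0 for every γ ∈ Γ, let ξ be a probability mass function on the positive integers, and let α > 1 be real. Let ĝ : Γ → ℝ be any score function (possibly not injective), and let g* : Γ → ℝ be any injective score function refining the weak order of ĝ, i.e. ĝ(x) < ĝ(y) implies g*(x) < g*(y) for all x, y ∈ Γ. Then D_α(F_{ξ,ĝ}[p] ‖ F_{ξ,ĝ}[p']) ≤ D_α(F_{ξ,g*}[p] ‖ F_{ξ,g*}[p']), where F_{ξ,g}[p](γ) = Σ_{k≥1} ξ(k)·F_{k,g}[p](γ) is the ξ-mixture of the best-of-k selection distributions. -/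

import Mathlib

open scoped Classical BigOperators

/-- Rényi divergence of order `α` between two pmfs `M`, `N` on a finite type:
`D_α(M‖N) = (1/(α−1))·log(Σ_x M(x)^α·N(x)^{1−α})` (real powers). -/
noncomputable def renyiDiv {Γ : Type*} [Fintype Γ] (α : ℝ) (M N : Γ → ℝ) : ℝ :=
  (1 / (α - 1)) * Real.log (∑ x, M x ^ α * N x ^ (1 - α))

/-- Best-of-`k` selection distribution with uniform tie-breaking: given a pmf `p` on a
finite type `Γ`, a score function `g`, and `k`, the probability of outputting `γ` is
`(1/|{i : g i = g γ}|)·[(Σ_{i : g i ≤ g γ} p i)^k − (Σ_{i : g i < g γ} p i)^k]`. -/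
noncomputable def bestOfK {Γ : Type*} [Fintype Γ] (p : Γ → ℝ) (g : Γ → ℝ) (k : ℕ)
    (γ : Γ) : ℝ :=
  (1 / (Finset.univ.filter (fun i => g i = g γ)).card) *
    ((∑ i ∈ Finset.univ.filter (fun i => g i ≤ g γ), p i) ^ k -
      (∑ i ∈ Finset.univ.filter (fun i => g i < g γ), p i) ^ k)

/-- The `ξ`-mixture of the best-of-`k` selection distributions:
`F_{ξ,g}[p](γ) = Σ_{k≥1} ξ(k)·F_{k,g}[p](γ)`. -/
noncomputable def bestOfXi {Γ : Type*} [Fintype Γ] (p : Γ → ℝ) (g : Γ → ℝ)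
    (ξ : ℕ+ → ℝ) (γ : Γ) : ℝ :=
  ∑' k : ℕ+, ξ k * bestOfK p g (k : ℕ) γ

open Finset

section Aux

/-- Telescoping: summing `F(c + partial sums up to x) − F(c + partial sums below x)`
over a finite set with injective labels telescopes. -/
lemma telescope_aux {Γ : Type*} (g : Γ → ℝ) (hg : Function.Injective g) (p : Γ → ℝ) (k : ℕ)
    (c : ℝ) (s : Finset Γ) :
    ∑ x ∈ s, ((c + ∑ y ∈ s.filter (fun y => g y ≤ g x), p y) ^ k
            - (c + ∑ y ∈ s.filter (fun y => g y < g x), p y) ^ k)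
    = (c + ∑ y ∈ s, p y) ^ k - c ^ k := by
  classical
  induction s using Finset.strongInduction with
  | _ s ih =>
    rcases s.eq_empty_or_nonempty with rfl | hne
    · simp
    obtain ⟨m, hm, hmax⟩ := s.exists_max_image g hne
    have hsub : s.erase m ⊂ s := Finset.erase_ssubset hm
    have hlt : ∀ x ∈ s.erase m, g x < g m := by
      intro x hx
      exact lt_of_le_of_ne (hmax x (Finset.mem_of_mem_erase hx))
        (fun h => (Finset.ne_of_mem_erase hx) (hg h))
    have hfle : ∀ x ∈ s.erase m, s.filter (fun y => g y ≤ g x)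
        = (s.erase m).filter (fun y => g y ≤ g x) := by
      intro x hx
      ext y
      simp only [Finset.mem_filter, Finset.mem_erase]
      constructor
      · rintro ⟨hy, hle⟩
        refine ⟨⟨fun h => ?_, hy⟩, hle⟩
        subst h
        exact absurd hle (not_le.2 (hlt x hx))
      · rintro ⟨⟨_, hy⟩, hle⟩; exact ⟨hy, hle⟩
    have hflt : ∀ x ∈ s.erase m, s.filter (fun y => g y < g x)
        = (s.erase m).filter (fun y => g y < g x) := by
      intro x hx
      ext y
      simp only [Finset.mem_filter, Finset.mem_erase]
      constructor
      · rintro ⟨hy, hle⟩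
        refine ⟨⟨fun h => ?_, hy⟩, hle⟩
        subst h
        exact absurd hle (not_lt.2 (hlt x hx).le)
      · rintro ⟨⟨_, hy⟩, hle⟩; exact ⟨hy, hle⟩
    have hm_le : s.filter (fun y => g y ≤ g m) = s := by
      apply Finset.filter_true_of_mem
      intro y hy; exact hmax y hy
    have hm_lt : s.filter (fun y => g y < g m) = s.erase m := by
      ext y
      simp only [Finset.mem_filter, Finset.mem_erase]
      constructor
      · rintro ⟨hy, hlt'⟩; exact ⟨fun h => absurd (h ▸ hlt') (lt_irrefl _), hy⟩
      · rintro ⟨hne', hy⟩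
        exact ⟨hy, lt_of_le_of_ne (hmax y hy) (fun h => hne' (hg h))⟩
    rw [← Finset.sum_erase_add s _ hm, hm_le, hm_lt]
    have : ∑ x ∈ s.erase m, ((c + ∑ y ∈ s.filter (fun y => g y ≤ g x), p y) ^ k
            - (c + ∑ y ∈ s.filter (fun y => g y < g x), p y) ^ k)
        = ∑ x ∈ s.erase m, ((c + ∑ y ∈ (s.erase m).filter (fun y => g y ≤ g x), p y) ^ k
            - (c + ∑ y ∈ (s.erase m).filter (fun y => g y < g x), p y) ^ k) := by
      apply Finset.sum_congr rfl
      intro x hx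
      rw [hfle x hx, hflt x hx]
    rw [this, ih _ hsub]
    ring

/-- Splitting the `gstar`-cumulative sums at an element of a `ghat`-tie class. -/
lemma split_sum {Γ : Type*} [Fintype Γ] (ghat gstar : Γ → ℝ)
    (href : ∀ x y, ghat x < ghat y → gstar x < gstar y)
    (R : ℝ → ℝ → Prop) (hR1 : ∀ {a b : ℝ}, a < b → R a b)
    (hR2 : ∀ {a b : ℝ}, R a b → ¬ b < a) (q : Γ → ℝ) (x γ : Γ) (hx : ghat x = ghat γ) :
    ∑ i ∈ univ.filter (fun i => R (gstar i) (gstar x)), q i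
      = (∑ i ∈ univ.filter (fun i => ghat i < ghat γ), q i)
        + ∑ i ∈ (univ.filter (fun i => ghat i = ghat γ)).filter
            (fun i => R (gstar i) (gstar x)), q i := by
  rw [← Finset.sum_union ?hd]
  case hd =>
    rw [Finset.disjoint_left]
    intro a ha hb
    simp only [Finset.mem_filter] at ha hb
    exact absurd hb.1.2 (ne_of_lt ha.2)
  apply Finset.sum_congr _ (fun _ _ => rfl)
  ext i
  simp only [Finset.mem_union, Finset.mem_filter, Finset.mem_univ, true_and]
  constructor
  · intro hR
    rcases lt_trichotomy (ghat i) (ghat γ) with h | h | h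
    · exact Or.inl h
    · exact Or.inr ⟨h, hR⟩
    · exact absurd (href x i (hx ▸ h)) (hR2 hR)
  · rintro (h | ⟨h, hR⟩)
    · exact hR1 (href i x (by rw [hx]; exact h))
    · exact hR

lemma filter_eq_singleton {Γ : Type*} [Fintype Γ] (g : Γ → ℝ) (hinj : Function.Injective g)
    (x : Γ) : univ.filter (fun i => g i = g x) = {x} := by
  ext i
  simp only [Finset.mem_filter, Finset.mem_univ, true_and, Finset.mem_singleton]
  exact ⟨fun h => hinj h, fun h => h ▸ rfl⟩

lemma le_filter_split {Γ : Type*} [Fintype Γ] (ghat : Γ → ℝ) (q : Γ → ℝ) (γ : Γ) :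
    ∑ i ∈ univ.filter (fun i => ghat i ≤ ghat γ), q i
      = (∑ i ∈ univ.filter (fun i => ghat i < ghat γ), q i)
        + ∑ i ∈ univ.filter (fun i => ghat i = ghat γ), q i := by
  rw [← Finset.sum_union ?hd]
  case hd =>
    rw [Finset.disjoint_left]
    intro a ha hb
    simp only [Finset.mem_filter] at ha hb
    exact absurd hb.2 (ne_of_lt ha.2)
  apply Finset.sum_congr _ (fun _ _ => rfl)
  ext i
  simp only [Finset.mem_union, Finset.mem_filter, Finset.mem_univ, true_and]
  exact ⟨fun h => lt_or_eq_of_le h, fun h => h.elim le_of_lt le_of_eq⟩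

/-- Tie-breaking is averaging: `F_{k,ĝ}[p](γ)` is the average of `F_{k,g*}[p]` over the
tie class of `γ`. -/
lemma bestOfK_ghat_avg {Γ : Type*} [Fintype Γ] (p : Γ → ℝ) (ghat gstar : Γ → ℝ)
    (hinj : Function.Injective gstar)
    (href : ∀ x y, ghat x < ghat y → gstar x < gstar y) (k : ℕ) (γ : Γ) :
    bestOfK p ghat k γ = (1 / (univ.filter (fun i => ghat i = ghat γ)).card) *
      ∑ x ∈ univ.filter (fun i => ghat i = ghat γ), bestOfK p gstar k x := by
  set c : ℝ := ∑ i ∈ univ.filter (fun i => ghat i < ghat γ), p i with hc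
  have key : ∑ x ∈ univ.filter (fun i => ghat i = ghat γ), bestOfK p gstar k x
      = (∑ i ∈ univ.filter (fun i => ghat i ≤ ghat γ), p i) ^ k - c ^ k := by
    have h1 : ∀ x ∈ univ.filter (fun i => ghat i = ghat γ), bestOfK p gstar k x
        = ((c + ∑ y ∈ (univ.filter (fun i => ghat i = ghat γ)).filter
              (fun y => gstar y ≤ gstar x), p y) ^ k
          - (c + ∑ y ∈ (univ.filter (fun i => ghat i = ghat γ)).filter
              (fun y => gstar y < gstar x), p y) ^ k) := by
      intro x hx
      have hx' : ghat x = ghat γ := (Finset.mem_filter.1 hx).2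
      unfold bestOfK
      rw [filter_eq_singleton gstar hinj x]
      rw [split_sum ghat gstar href (· ≤ ·) le_of_lt (fun h => not_lt.2 h) p x γ hx']
      rw [split_sum ghat gstar href (· < ·) id (fun h => asymm h) p x γ hx']
      simp
      rfl
    rw [Finset.sum_congr rfl h1,
      telescope_aux gstar hinj p k c (univ.filter (fun i => ghat i = ghat γ)),
      le_filter_split ghat p γ]
  rw [key]
  unfold bestOfK
  rw [le_filter_split ghat p γ]

lemma card_class_pos {Γ : Type*} [Fintype Γ] (g : Γ → ℝ) (γ : Γ) :
    0 < (univ.filter (fun i => g i = g γ)).card := by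
  apply Finset.card_pos.2
  exact ⟨γ, Finset.mem_filter.2 ⟨Finset.mem_univ γ, rfl⟩⟩

lemma sum_filter_lt_le {Γ : Type*} [Fintype Γ] (p : Γ → ℝ) (hp0 : ∀ x, 0 ≤ p x)
    (g : Γ → ℝ) (γ : Γ) :
    ∑ i ∈ univ.filter (fun i => g i < g γ), p i
      ≤ ∑ i ∈ univ.filter (fun i => g i ≤ g γ), p i := by
  apply Finset.sum_le_sum_of_subset_of_nonneg
  · intro i hi
    simp only [Finset.mem_filter] at hi ⊢
    exact ⟨hi.1, hi.2.le⟩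
  · intro i _ _; exact hp0 i

lemma bestOfK_nonneg {Γ : Type*} [Fintype Γ] (p : Γ → ℝ) (hp0 : ∀ x, 0 ≤ p x)
    (g : Γ → ℝ) (k : ℕ) (γ : Γ) : 0 ≤ bestOfK p g k γ := by
  unfold bestOfK
  apply mul_nonneg (by positivity)
  rw [sub_nonneg]
  exact pow_le_pow_left₀ (Finset.sum_nonneg (fun i _ => hp0 i)) (sum_filter_lt_le p hp0 g γ) k

lemma bestOfK_le_one {Γ : Type*} [Fintype Γ] (p : Γ → ℝ) (hp0 : ∀ x, 0 ≤ p x)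
    (hp1 : ∑ x, p x = 1) (g : Γ → ℝ) (k : ℕ) (γ : Γ) : bestOfK p g k γ ≤ 1 := by
  unfold bestOfK
  have hc : (1 : ℝ) ≤ (univ.filter (fun i => g i = g γ)).card := by
    exact_mod_cast card_class_pos g γ
  have hle1 : ∑ i ∈ univ.filter (fun i => g i ≤ g γ), p i ≤ 1 := by
    rw [← hp1]
    exact Finset.sum_le_sum_of_subset_of_nonneg (Finset.filter_subset _ _)
      (fun i _ _ => hp0 i)
  have h0 : (0:ℝ) ≤ ∑ i ∈ univ.filter (fun i => g i < g γ), p i :=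
    Finset.sum_nonneg (fun i _ => hp0 i)
  apply mul_le_one₀
  · rw [div_le_one (by exact_mod_cast card_class_pos g γ)]; exact hc
  · rw [sub_nonneg]
    exact pow_le_pow_left₀ (Finset.sum_nonneg (fun i _ => hp0 i))
      (sum_filter_lt_le p hp0 g γ) k
  · calc _ ≤ (∑ i ∈ univ.filter (fun i => g i ≤ g γ), p i) ^ k := by
          rw [sub_le_self_iff]; positivity
      _ ≤ 1 := pow_le_one₀ (Finset.sum_nonneg (fun i _ => hp0 i)) hle1

lemma bestOfK_pos {Γ : Type*} [Fintype Γ] (p : Γ → ℝ) (hp0 : ∀ x, 0 ≤ p x)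
    (g : Γ → ℝ) (k : ℕ) (hk : 0 < k) (γ : Γ) (hγ : 0 < p γ) : 0 < bestOfK p g k γ := by
  unfold bestOfK
  apply mul_pos
  · have := card_class_pos g γ; positivity
  · rw [sub_pos]
    apply pow_lt_pow_left₀ _ (Finset.sum_nonneg (fun i _ => hp0 i)) hk.ne'
    have hsplit := le_filter_split g p γ
    rw [hsplit, lt_add_iff_pos_right]
    have hmem : γ ∈ univ.filter (fun i => g i = g γ) :=
      Finset.mem_filter.2 ⟨Finset.mem_univ γ, rfl⟩
    exact lt_of_lt_of_le hγ (Finset.single_le_sum (f := p) (fun i _ => hp0 i) hmem)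

lemma summable_xi (ξ : ℕ+ → ℝ) (hξ1 : ∑' k, ξ k = 1) : Summable ξ := by
  by_contra h
  rw [tsum_eq_zero_of_not_summable h] at hξ1
  norm_num at hξ1

lemma summable_term {Γ : Type*} [Fintype Γ] (p : Γ → ℝ) (hp0 : ∀ x, 0 ≤ p x)
    (hp1 : ∑ x, p x = 1) (ξ : ℕ+ → ℝ) (hξ0 : ∀ k, 0 ≤ ξ k) (hξ1 : ∑' k, ξ k = 1)
    (g : Γ → ℝ) (γ : Γ) : Summable (fun k : ℕ+ => ξ k * bestOfK p g (k : ℕ) γ) := by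
  apply Summable.of_nonneg_of_le
    (fun k => mul_nonneg (hξ0 k) (bestOfK_nonneg p hp0 g _ γ))
    (fun k => ?_) (summable_xi ξ hξ1)
  calc ξ k * bestOfK p g (k : ℕ) γ ≤ ξ k * 1 :=
        mul_le_mul_of_nonneg_left (bestOfK_le_one p hp0 hp1 g _ γ) (hξ0 k)
    _ = ξ k := mul_one _

lemma bestOfXi_nonneg {Γ : Type*} [Fintype Γ] (p : Γ → ℝ) (hp0 : ∀ x, 0 ≤ p x)
    (ξ : ℕ+ → ℝ) (hξ0 : ∀ k, 0 ≤ ξ k) (g : Γ → ℝ) (γ : Γ) : 0 ≤ bestOfXi p g ξ γ :=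
  tsum_nonneg (fun k => mul_nonneg (hξ0 k) (bestOfK_nonneg p hp0 g _ γ))

lemma exists_xi_pos (ξ : ℕ+ → ℝ) (hξ0 : ∀ k, 0 ≤ ξ k) (hξ1 : ∑' k, ξ k = 1) :
    ∃ k, 0 < ξ k := by
  by_contra h
  push_neg at h
  have : ∀ k, ξ k = 0 := fun k => le_antisymm (h k) (hξ0 k)
  rw [tsum_congr this, tsum_zero] at hξ1
  norm_num at hξ1

lemma bestOfXi_pos {Γ : Type*} [Fintype Γ] (p : Γ → ℝ) (hp0 : ∀ x, 0 ≤ p x)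
    (hp1 : ∑ x, p x = 1) (ξ : ℕ+ → ℝ) (hξ0 : ∀ k, 0 ≤ ξ k) (hξ1 : ∑' k, ξ k = 1)
    (g : Γ → ℝ) (γ : Γ) (hγ : 0 < p γ) : 0 < bestOfXi p g ξ γ := by
  obtain ⟨k, hk⟩ := exists_xi_pos ξ hξ0 hξ1
  exact Summable.tsum_pos (summable_term p hp0 hp1 ξ hξ0 hξ1 g γ)
    (fun j => mul_nonneg (hξ0 j) (bestOfK_nonneg p hp0 g _ γ)) k
    (mul_pos hk (bestOfK_pos p hp0 g _ k.pos γ hγ))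

lemma bestOfXi_ghat_avg {Γ : Type*} [Fintype Γ] (p : Γ → ℝ) (hp0 : ∀ x, 0 ≤ p x)
    (hp1 : ∑ x, p x = 1) (ξ : ℕ+ → ℝ) (hξ0 : ∀ k, 0 ≤ ξ k) (hξ1 : ∑' k, ξ k = 1)
    (ghat gstar : Γ → ℝ) (hinj : Function.Injective gstar)
    (href : ∀ x y, ghat x < ghat y → gstar x < gstar y) (γ : Γ) :
    bestOfXi p ghat ξ γ = (1 / (univ.filter (fun i => ghat i = ghat γ)).card) *
      ∑ x ∈ univ.filter (fun i => ghat i = ghat γ), bestOfXi p gstar ξ x := by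
  unfold bestOfXi
  have step1 : ∀ k : ℕ+, ξ k * bestOfK p ghat (k : ℕ) γ
      = ∑ x ∈ univ.filter (fun i => ghat i = ghat γ),
          (1 / (univ.filter (fun i => ghat i = ghat γ)).card : ℝ) *
            (ξ k * bestOfK p gstar (k : ℕ) x) := by
    intro k
    rw [bestOfK_ghat_avg p ghat gstar hinj href, ← Finset.mul_sum, ← Finset.mul_sum]
    ring
  rw [tsum_congr step1, Summable.tsum_finsetSum (fun x _ =>
    (Summable.mul_left _ (summable_term p hp0 hp1 ξ hξ0 hξ1 gstar x)))]
  rw [Finset.mul_sum]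
  apply Finset.sum_congr rfl
  intro x _
  rw [tsum_mul_left]

/-- Per-fiber Hölder/Jensen inequality:
`(Σ M)^α (Σ N)^{1−α} ≤ Σ M^α N^{1−α}` for `α > 1`, `M ≥ 0`, `N > 0`. -/
lemma holder_fiber {Γ : Type*} (s : Finset Γ) (hs : s.Nonempty) (M N : Γ → ℝ)
    (hM : ∀ x ∈ s, 0 ≤ M x) (hN : ∀ x ∈ s, 0 < N x) (α : ℝ) (hα : 1 < α) :
    (∑ x ∈ s, M x) ^ α * (∑ x ∈ s, N x) ^ (1 - α)
      ≤ ∑ x ∈ s, M x ^ α * N x ^ (1 - α) := by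
  set SN := ∑ x ∈ s, N x with hSN
  have hSNpos : 0 < SN := Finset.sum_pos hN hs
  set w : Γ → ℝ := fun x => N x / SN with hw_def
  set z : Γ → ℝ := fun x => M x / N x with hz_def
  have hw : ∀ x ∈ s, 0 ≤ w x := fun x hx => div_nonneg (hN x hx).le hSNpos.le
  have hw1 : ∑ x ∈ s, w x = 1 := by
    rw [hw_def, ← Finset.sum_div]; exact div_self hSNpos.ne'
  have hz : ∀ x ∈ s, 0 ≤ z x := fun x hx => div_nonneg (hM x hx) (hN x hx).le
  have key := Real.rpow_arith_mean_le_arith_mean_rpow s w z hw hw1 hz hα.le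
  have hwz : ∑ x ∈ s, w x * z x = (∑ x ∈ s, M x) / SN := by
    rw [Finset.sum_div]
    apply Finset.sum_congr rfl
    intro x hx
    rw [hw_def, hz_def]
    field_simp [(hN x hx).ne', hSNpos.ne']
  have hrhs : ∑ x ∈ s, w x * z x ^ α = (∑ x ∈ s, M x ^ α * N x ^ (1 - α)) / SN := by
    rw [Finset.sum_div]
    apply Finset.sum_congr rfl
    intro x hx
    rw [hw_def, hz_def]
    simp only
    rw [Real.div_rpow (hM x hx) (hN x hx).le, Real.rpow_sub (hN x hx), Real.rpow_one]
    field_simp [(hN x hx).ne', hSNpos.ne', (Real.rpow_pos_of_pos (hN x hx) α).ne']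
  rw [hwz, hrhs] at key
  have hM0 : 0 ≤ ∑ x ∈ s, M x := Finset.sum_nonneg hM
  rw [Real.div_rpow hM0 hSNpos.le] at key
  rw [Real.rpow_sub hSNpos, Real.rpow_one]
  have key2 := mul_le_mul_of_nonneg_left key hSNpos.le
  calc (∑ x ∈ s, M x) ^ α * (SN / SN ^ α)
      = SN * ((∑ x ∈ s, M x) ^ α / SN ^ α) := by ring
    _ ≤ SN * ((∑ x ∈ s, M x ^ α * N x ^ (1 - α)) / SN) := key2
    _ = ∑ x ∈ s, M x ^ α * N x ^ (1 - α) := mul_div_cancel₀ _ hSNpos.ne'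

end Aux

/-- for pmfs `p`, `p'` (with `p'` strictly positive) on a finite type, a pmf
`ξ` on the positive integers, `α > 1`, any score function `ĝ` and any injective score
function `g*` refining the weak order of `ĝ`,
`D_α(F_{ξ,ĝ}[p] ‖ F_{ξ,ĝ}[p']) ≤ D_α(F_{ξ,g*}[p] ‖ F_{ξ,g*}[p'])`. -/
theorem stmt_3 {Γ : Type*} [Fintype Γ] (p p' : Γ → ℝ) (hp0 : ∀ x, 0 ≤ p x)
    (hp1 : ∑ x, p x = 1) (hp'0 : ∀ x, 0 < p' x) (hp'1 : ∑ x, p' x = 1)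
    (ξ : ℕ+ → ℝ) (hξ0 : ∀ k, 0 ≤ ξ k) (hξ1 : ∑' k, ξ k = 1) (α : ℝ) (hα : 1 < α)
    (ghat gstar : Γ → ℝ) (hinj : Function.Injective gstar)
    (href : ∀ x y, ghat x < ghat y → gstar x < gstar y) :
    renyiDiv α (bestOfXi p ghat ξ) (bestOfXi p' ghat ξ) ≤
      renyiDiv α (bestOfXi p gstar ξ) (bestOfXi p' gstar ξ) := by
  classical
  have hM0 : ∀ x, 0 ≤ bestOfXi p gstar ξ x := fun x => bestOfXi_nonneg p hp0 ξ hξ0 gstar x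
  have hN0 : ∀ x, 0 < bestOfXi p' gstar ξ x := fun x =>
    bestOfXi_pos p' (fun y => (hp'0 y).le) hp'1 ξ hξ0 hξ1 gstar x (hp'0 x)
  have hmaps : ∀ x : Γ, x ∈ (univ : Finset Γ) → ghat x ∈ univ.image ghat :=
    fun x _ => Finset.mem_image_of_mem _ (Finset.mem_univ x)
  have hfiber : ∀ (f : Γ → ℝ), ∑ x, f x
      = ∑ b ∈ univ.image ghat, ∑ x ∈ univ.filter (fun i => ghat i = b), f x :=
    fun f => (Finset.sum_fiberwise_of_maps_to hmaps f).symm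
  -- main sum inequality
  have hsum_le : ∑ x, (bestOfXi p ghat ξ x) ^ α * (bestOfXi p' ghat ξ x) ^ (1 - α)
      ≤ ∑ x, (bestOfXi p gstar ξ x) ^ α * (bestOfXi p' gstar ξ x) ^ (1 - α) := by
    rw [hfiber (fun x => (bestOfXi p ghat ξ x) ^ α * (bestOfXi p' ghat ξ x) ^ (1 - α)),
      hfiber (fun x => (bestOfXi p gstar ξ x) ^ α * (bestOfXi p' gstar ξ x) ^ (1 - α))]
    apply Finset.sum_le_sum
    intro b hb
    obtain ⟨γ0, _, hγ0⟩ := Finset.mem_image.1 hb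
    have hne : (univ.filter (fun i => ghat i = b)).Nonempty :=
      ⟨γ0, Finset.mem_filter.2 ⟨Finset.mem_univ _, hγ0⟩⟩
    set C := univ.filter (fun i => ghat i = b) with hC
    set c : ℝ := (C.card : ℝ) with hcdef
    have hcpos : 0 < c := by
      rw [hcdef]; exact_mod_cast Finset.card_pos.2 hne
    set SM := ∑ y ∈ C, bestOfXi p gstar ξ y with hSM
    set SN := ∑ y ∈ C, bestOfXi p' gstar ξ y with hSN2
    have hSMnn : 0 ≤ SM := Finset.sum_nonneg (fun y _ => hM0 y)
    have hSNpos : 0 < SN := Finset.sum_pos (fun y _ => hN0 y) hne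
    have havgM : ∀ x ∈ C, bestOfXi p ghat ξ x = (1 / c) * SM := by
      intro x hx
      have hx' : ghat x = b := (Finset.mem_filter.1 hx).2
      rw [bestOfXi_ghat_avg p hp0 hp1 ξ hξ0 hξ1 ghat gstar hinj href x]
      rw [hSM, hC, hcdef]
      rw [hx']
    have havgN : ∀ x ∈ C, bestOfXi p' ghat ξ x = (1 / c) * SN := by
      intro x hx
      have hx' : ghat x = b := (Finset.mem_filter.1 hx).2
      rw [bestOfXi_ghat_avg p' (fun y => (hp'0 y).le) hp'1 ξ hξ0 hξ1 ghat gstar hinj href x]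
      rw [hSN2, hC, hcdef]
      rw [hx']
    have hterm : ∀ x ∈ C,
        (bestOfXi p ghat ξ x) ^ α * (bestOfXi p' ghat ξ x) ^ (1 - α)
          = (1 / c) * (SM ^ α * SN ^ (1 - α)) := by
      intro x hx
      rw [havgM x hx, havgN x hx]
      have h1c : (0:ℝ) < 1 / c := by positivity
      rw [Real.mul_rpow h1c.le hSMnn, Real.mul_rpow h1c.le hSNpos.le]
      have : (1 / c) ^ α * (1 / c) ^ (1 - α) = 1 / c := by
        rw [← Real.rpow_add h1c]
        norm_num
      calc (1 / c) ^ α * SM ^ α * ((1 / c) ^ (1 - α) * SN ^ (1 - α))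
          = ((1 / c) ^ α * (1 / c) ^ (1 - α)) * (SM ^ α * SN ^ (1 - α)) := by ring
        _ = (1 / c) * (SM ^ α * SN ^ (1 - α)) := by rw [this]
    rw [Finset.sum_congr rfl hterm, Finset.sum_const, nsmul_eq_mul]
    have hcount : (C.card : ℝ) * ((1 / c) * (SM ^ α * SN ^ (1 - α)))
        = SM ^ α * SN ^ (1 - α) := by
      rw [← hcdef]
      field_simp
    rw [hcount]
    exact holder_fiber C hne _ _ (fun y _ => hM0 y) (fun y _ => hN0 y) α hα
  -- positivity of the left-hand sum
  have hex : ∃ γ1, 0 < p γ1 := by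
    by_contra h
    push_neg at h
    have : ∀ x, p x = 0 := fun x => le_antisymm (h x) (hp0 x)
    rw [Finset.sum_congr rfl (fun x _ => this x)] at hp1
    simp at hp1
  obtain ⟨γ1, hγ1⟩ := hex
  have hpos : 0 < ∑ x, (bestOfXi p ghat ξ x) ^ α * (bestOfXi p' ghat ξ x) ^ (1 - α) := by
    apply Finset.sum_pos'
    · intro x _
      apply mul_nonneg (Real.rpow_nonneg (bestOfXi_nonneg p hp0 ξ hξ0 ghat x) α)
      exact (Real.rpow_pos_of_pos
        (bestOfXi_pos p' (fun y => (hp'0 y).le) hp'1 ξ hξ0 hξ1 ghat x (hp'0 x)) _).le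
    · refine ⟨γ1, Finset.mem_univ γ1, ?_⟩
      apply mul_pos
      · exact Real.rpow_pos_of_pos (bestOfXi_pos p hp0 hp1 ξ hξ0 hξ1 ghat γ1 hγ1) α
      · exact Real.rpow_pos_of_pos
          (bestOfXi_pos p' (fun y => (hp'0 y).le) hp'1 ξ hξ0 hξ1 ghat γ1 (hp'0 γ1)) _
  unfold renyiDiv
  have hcoef : (0:ℝ) ≤ 1 / (α - 1) := by
    have : (0:ℝ) < α - 1 := sub_pos.2 hα
    positivity
  exact mul_le_mul_of_nonneg_left (Real.log_le_log hpos hsum_le) hcoef
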